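/- There exist rooted trees T₁ and T₂ with largest common minor T_μ and smallest common supertree T_σ (under minor embeddings) such that |V(T_σ)| ≠ |V(T₁)| + |V(T₂)| − |V(T_μ)|. -/

import Mathlib

/-- A directed path in a graph `E`, given as a nonempty list of visited nodes
from `a` to `b` (endpoints included). A trivial path is `[a]` with `a = b`. -/
def IsPath {V : Type*} (E : V → V → Prop) (p : List V) (a b : V) : Prop :=
  p.Chain' E ∧ p.head? = some a ∧ p.getLast? = some b

/-- There is a (possibly trivial) directed path from `a` to `b`. -/
def Reach {V : Type*} (E : V → V → Prop) (a b : V) : Prop :=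
  ∃ p : List V, IsPath E p a b

/-- A rooted tree: a finite directed graph with root `r` such that every node is
reachable from `r` by a unique directed path (and there are no self-loops). -/
structure IsRootedTree {V : Type*} [Fintype V] (E : V → V → Prop) (r : V) : Prop where
  no_self : ∀ v, ¬ E v v
  reach : ∀ v, ∃ p : List V, IsPath E p r v
  path_unique : ∀ v (p q : List V), IsPath E p r v → IsPath E q r v → p = q

/-- A minor embedding `f : S → T`: an injective node map such that every arc `(a,b)`
of `S` maps to a directed path from `f a` to `f b` in `T` with no intermediate node
in the image of `f`. -/
def IsMinorEmb {V W : Type*} (ES : V → V → Prop) (ET : W → W → Prop) (f : V → W) : Prop :=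
  Function.Injective f ∧
    ∀ a b, ES a b → ∃ p : List W, IsPath ET p (f a) (f b) ∧
      ∀ x ∈ p.tail.dropLast, x ∉ Set.range f

/-- There is a common minor of `T₁` and `T₂` with `n` nodes. -/
def CommonMinorSize {V1 V2 : Type*} (E1 : V1 → V1 → Prop) (E2 : V2 → V2 → Prop)
    (n : ℕ) : Prop :=
  ∃ (E : Fin n → Fin n → Prop) (r : Fin n), IsRootedTree E r ∧
    (∃ f : Fin n → V1, IsMinorEmb E E1 f) ∧ (∃ g : Fin n → V2, IsMinorEmb E E2 g)

/-- There is a common supertree of `T₁` and `T₂` with `n` nodes. -/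
def CommonSupSize {V1 V2 : Type*} (E1 : V1 → V1 → Prop) (E2 : V2 → V2 → Prop)
    (n : ℕ) : Prop :=
  ∃ (E : Fin n → Fin n → Prop) (r : Fin n), IsRootedTree E r ∧
    (∃ f : V1 → Fin n, IsMinorEmb E1 E f) ∧ (∃ g : V2 → Fin n, IsMinorEmb E2 E g)


section BasicPaths
variable {V : Type*} {E : V → V → Prop} {p q : List V} {a b c : V}

theorem path_ne_nil (h : IsPath E p a b) : p ≠ [] := by
  rintro rfl; simp [IsPath] at h

theorem path_singleton (h : IsPath E [a] a b) : a = b := by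
  simp [IsPath, List.Chain'] at h; exact h

theorem path_cons_decomp (h : IsPath E p a b) : p = a :: p.tail := by
  rcases p with _ | ⟨x, t⟩
  · simp [IsPath] at h
  · obtain ⟨_, h2, _⟩ := h; simp at h2; simp [h2]

/-- decomposition from the right: `p = p.dropLast ++ [b]`. -/
theorem path_concat_decomp (h : IsPath E p a b) : p = p.dropLast ++ [b] := by
  obtain ⟨L, x, he⟩ : ∃ L x, p = L ++ [x] := by
    rcases List.eq_nil_or_concat p with he | ⟨L, x, he⟩
    · exact absurd he (path_ne_nil h)
    · exact ⟨L, x, by simpa [List.concat_eq_append] using he⟩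
  subst he
  have h2 := h.2.2
  rw [List.getLast?_concat] at h2
  simp at h2
  rw [← h2, List.dropLast_concat]

theorem path_concat (h1 : IsPath E p a b) (h2 : IsPath E q b c) :
    IsPath E (p ++ q.tail) a c := by
  have hq : q = b :: q.tail := path_cons_decomp h2
  have hp : p ≠ [] := path_ne_nil h1
  rcases ht : q.tail with _ | ⟨z, t⟩
  · have : b = c := by
      rw [hq, ht] at h2; exact path_singleton h2
    simpa [ht] using this ▸ h1
  · have hc2 : List.Chain' E (b :: z :: t) := by rw [hq, ht] at h2; exact h2.1
    refine ⟨?_, ?_, ?_⟩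
    · apply List.IsChain.append h1.1 (List.isChain_cons_cons.1 hc2).2
      intro x hx y hy
      rw [h1.2.2] at hx; simp at hx hy; subst hx; subst hy
      exact (List.isChain_cons_cons.1 hc2).1
    · rw [List.head?_append_of_ne_nil _ hp]; exact h1.2.1
    · rw [List.getLast?_append_of_ne_nil _ (by simp)]
      have := h2.2.2
      rw [hq, ht] at this
      simpa using this

theorem reach_refl (a : V) : Reach E a a := ⟨[a], by simp [IsPath, List.Chain']⟩

theorem reach_trans (h1 : Reach E a b) (h2 : Reach E b c) : Reach E a c := by
  obtain ⟨p, hp⟩ := h1; obtain ⟨q, hq⟩ := h2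
  exact ⟨_, path_concat hp hq⟩

theorem reach_of_arc (h : E a b) : Reach E a b := ⟨[a, b], by simp [IsPath, List.Chain', h]⟩

theorem reach_head_of_mem : ∀ {p : List V}, p.Chain' E → ∀ {x a : V}, x ∈ p →
    p.head? = some a → Reach E a x := by
  intro p
  induction p with
  | nil => intro _ x a hx; simp at hx
  | cons y t ih =>
    intro hc x a hx hh
    have hya : y = a := by simpa using hh
    have key : Reach E y x := by
      rcases List.mem_cons.1 hx with rfl | hx'
      · exact reach_refl x
      · rcases t with _ | ⟨z, t'⟩
        · simp at hx'
        · have h1 : E y z := (List.isChain_cons_cons.1 hc).1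
          have h2 := ih (a := z) (List.isChain_cons_cons.1 hc).2 hx' rfl
          exact reach_trans (reach_of_arc h1) h2
    exact hya ▸ key

theorem mem_comparable (hc : p.Chain' E) (hx : a ∈ p) (hy : b ∈ p) :
    Reach E a b ∨ Reach E b a := by
  induction p with
  | nil => simp at hx
  | cons z t ih =>
    rcases List.mem_cons.1 hx with rfl | hx'
    · exact Or.inl (reach_head_of_mem hc hy (by simp))
    · rcases List.mem_cons.1 hy with rfl | hy'
      · exact Or.inr (reach_head_of_mem hc hx (by simp))
      · exact ih hc.tail hx' hy'

theorem path_mem_interior (h : IsPath E p a b) (hx : c ∈ p) (hca : c ≠ a) (hcb : c ≠ b) :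
    c ∈ p.tail.dropLast := by
  have hp := path_cons_decomp h
  have hxt : c ∈ p.tail := by
    rw [hp] at hx; rcases List.mem_cons.1 hx with rfl | h'
    · exact absurd rfl hca
    · exact h'
  rcases List.eq_nil_or_concat p.tail with he | ⟨L, x, he⟩
  · rw [he] at hxt; simp at hxt
  · rw [List.concat_eq_append] at he
    have hlast : x = b := by
      have h2 := h.2.2
      rw [hp, he] at h2
      rw [show a :: (L ++ [x]) = (a :: L) ++ [x] by simp, List.getLast?_concat] at h2
      simpa using h2
    rw [he, List.dropLast_concat]
    rw [he] at hxt
    rcases List.mem_append.1 hxt with h' | h'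
    · exact h'
    · simp at h'; exact absurd (h'.trans hlast) hcb

/-- a path of ≥2 nodes ends in an arc into its endpoint. -/
theorem path_penult (h : IsPath E p a b) (hne : p.tail ≠ []) : ∃ u, E u b := by
  have hp := path_cons_decomp h
  obtain ⟨L, x, he⟩ : ∃ L x, p.tail = L ++ [x] := by
    rcases List.eq_nil_or_concat p.tail with he | ⟨L, x, he⟩
    · exact absurd he hne
    · exact ⟨L, x, by simpa [List.concat_eq_append] using he⟩
  have hlast : x = b := by
    have h2 := h.2.2
    rw [hp, he, show a :: (L ++ [x]) = (a :: L) ++ [x] by simp,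
      List.getLast?_concat] at h2
    simpa using h2
  have hc : List.Chain' E ((a :: L) ++ [x]) := by
    have := h.1; rw [hp, he] at this; simpa using this
  refine ⟨(a :: L).getLast (by simp), ?_⟩
  rw [← hlast]
  exact (List.isChain_append.1 hc).2.2 _ (by simp [List.getLast?_eq_getLast]) x rfl


end BasicPaths

section TreeLemmas
variable {V : Type*} [Fintype V] {E : V → V → Prop} {r : V} {p q : List V} {a b c v : V}

theorem uniq_between (hT : IsRootedTree E r) (h1 : IsPath E p a b) (h2 : IsPath E q a b) :
    p = q := by
  obtain ⟨pr, hpr⟩ := hT.reach a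
  have e1 := hT.path_unique b _ _ (path_concat hpr h1) (path_concat hpr h2)
  have e2 : p.tail = q.tail := List.append_cancel_left e1
  rw [path_cons_decomp h1, path_cons_decomp h2, e2]

theorem reach_antisymm (hT : IsRootedTree E r) (h1 : Reach E a b) (h2 : Reach E b a) :
    a = b := by
  obtain ⟨p, hp⟩ := h1; obtain ⟨q, hq⟩ := h2
  have h3 : IsPath E (p ++ q.tail) a a := path_concat hp hq
  have h4 : IsPath E [a] a a := by simp [IsPath, List.Chain']
  have := uniq_between hT h3 h4
  have hlen : p.length + q.tail.length = 1 := by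
    have := congrArg List.length this; simpa using this
  have hp1 : p.length = 1 := by
    have := List.length_pos_iff.2 (path_ne_nil hp); omega
  rcases p with _ | ⟨x, t⟩
  · simp at hp1
  · rcases t with _ | ⟨y, t'⟩
    · have : x = a := by simpa using hp.2.1
      subst this
      exact path_singleton hp
    · simp at hp1

theorem comparable_of_common_desc (hT : IsRootedTree E r) (h1 : Reach E a c) (h2 : Reach E b c) :
    Reach E a b ∨ Reach E b a := by
  obtain ⟨ra, hra⟩ := hT.reach a
  obtain ⟨rb, hrb⟩ := hT.reach b
  obtain ⟨p, hp⟩ := h1; obtain ⟨q, hq⟩ := h2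
  have e := hT.path_unique c _ _ (path_concat hra hp) (path_concat hrb hq)
  have ha : a ∈ ra ++ p.tail := by
    have := path_concat_decomp hra
    rw [this]; simp
  have hb : b ∈ ra ++ p.tail := by
    rw [e]
    have := path_concat_decomp hrb
    rw [this]; simp
  exact mem_comparable (path_concat hra hp).1 ha hb

theorem sibling_incomp (hT : IsRootedTree E r) (h1 : E v a) (h2 : E v b) (hab : a ≠ b) :
    ¬ Reach E a b := by
  rintro ⟨p, hp⟩
  have hpa : IsPath E [v, a] v a := by simp [IsPath, List.Chain', h1]
  have h3 : IsPath E ([v, a] ++ p.tail) v b := path_concat hpa hp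
  have h3' : IsPath E (v :: p) v b := by
    have : [v, a] ++ p.tail = v :: p := by
      conv_rhs => rw [path_cons_decomp hp]
      rfl
    rwa [this] at h3
  have h4 : IsPath E [v, b] v b := by simp [IsPath, List.Chain', h2]
  have he : v :: p = [v, b] := uniq_between hT h3' h4
  have hpb : p = [b] := by simpa using he
  have := hp.2.1
  rw [hpb] at this
  exact hab (by simpa using this.symm)

theorem parent_unique (hT : IsRootedTree E r) (h1 : E a v) (h2 : E b v) : a = b := by
  obtain ⟨pa, hpa⟩ := hT.reach a
  obtain ⟨pb, hpb⟩ := hT.reach b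
  have c1 : IsPath E (pa ++ [v]) r v :=
    path_concat (q := [a, v]) hpa ⟨by simp [List.Chain', h1], by simp, by simp⟩
  have c2 : IsPath E (pb ++ [v]) r v :=
    path_concat (q := [b, v]) hpb ⟨by simp [List.Chain', h2], by simp, by simp⟩
  have e := hT.path_unique v _ _ c1 c2
  have : pa = pb := by
    have := congrArg List.dropLast e; simpa using this
  have ha : pa.getLast? = some a := hpa.2.2
  have hb : pb.getLast? = some b := hpb.2.2
  rw [this, hb] at ha; simpa using ha.symm

theorem root_no_parent (hT : IsRootedTree E r) (h1 : E a r) : False := by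
  obtain ⟨pa, hpa⟩ := hT.reach a
  have c1 : IsPath E (pa ++ [r]) r r :=
    path_concat (q := [a, r]) hpa ⟨by simp [List.Chain', h1], by simp, by simp⟩
  have c2 : IsPath E [r] r r := by simp [IsPath, List.Chain']
  have he := hT.path_unique r _ _ c1 c2
  have hlen := congrArg List.length he
  simp at hlen
  exact path_ne_nil hpa hlen

theorem nonroot_has_parent (hT : IsRootedTree E r) (hv : v ≠ r) : ∃ u, E u v := by
  obtain ⟨p, hp⟩ := hT.reach v
  apply path_penult hp
  intro ht
  have := path_cons_decomp hp
  rw [ht] at this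
  rw [this] at hp
  exact hv (path_singleton hp).symm
end TreeLemmas

section Arcs
variable {V : Type*} [Fintype V] [DecidableEq V] {E : V → V → Prop} {r : V}

theorem arcs_card (hT : IsRootedTree E r) [∀ a b, Decidable (E a b)] :
    (Finset.univ.filter fun p : V × V => E p.1 p.2).card = Fintype.card V - 1 := by
  have h := Finset.card_bij (s := Finset.univ.filter fun p : V × V => E p.1 p.2)
    (t := Finset.univ.erase r) (fun p _ => p.2)
    (fun p hp => by
      simp only [Finset.mem_filter] at hp
      refine Finset.mem_erase.2 ⟨?_, Finset.mem_univ _⟩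
      rintro rfl
      exact root_no_parent hT hp.2)
    (fun p hp q hq hpq => by
      simp only [Finset.mem_filter] at hp hq
      have hpq' : p.2 = q.2 := hpq
      have := parent_unique hT hp.2 (hpq' ▸ hq.2)
      exact Prod.ext this hpq')
    (fun v hv => by
      obtain ⟨u, hu⟩ := nonroot_has_parent hT (Finset.mem_erase.1 hv).1
      exact ⟨(u, v), by simpa using hu, rfl⟩)
  rw [h, Finset.card_erase_of_mem (Finset.mem_univ _), Finset.card_univ]

theorem four_forks_bound (hT : IsRootedTree E r) (v c d : Fin 4 → V)
    (hinj : Function.Injective v) (hcd : ∀ i, c i ≠ d i)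
    (hc : ∀ i, E (v i) (c i)) (hd : ∀ i, E (v i) (d i)) :
    9 ≤ Fintype.card V := by
  classical
  have key : 8 ≤ (Finset.univ.filter fun p : V × V => E p.1 p.2).card := by
    have h := Finset.card_le_card_of_injOn
      (f := fun ib : Fin 4 × Bool => ((v ib.1, if ib.2 then c ib.1 else d ib.1) : V × V))
      (s := Finset.univ) (t := Finset.univ.filter fun p : V × V => E p.1 p.2)
      (fun ib _ => by
        rcases ib with ⟨i, b⟩
        cases b <;> simp [hc i, hd i])
      (by
        rintro ⟨i, b⟩ - ⟨j, b'⟩ - he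
        simp only [Prod.mk.injEq] at he
        obtain rfl : i = j := hinj he.1
        have h2 := he.2
        cases b <;> cases b' <;> simp_all [hcd i, (hcd i).symm])
    simpa using h
  have := arcs_card hT
  omega

end Arcs

set_option linter.unusedSectionVars false
section Meet
variable {V : Type*} {E : V → V → Prop}

theorem meet_lemma :
    ∀ (p : List V) {q : List V} {v d1 d2 : V}, IsPath E p v d1 → IsPath E q v d2 →
    ¬ Reach E d1 d2 → ¬ Reach E d2 d1 →
    ∃ w c1 c2, Reach E v w ∧ E w c1 ∧ E w c2 ∧ c1 ≠ c2 ∧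
      Reach E c1 d1 ∧ Reach E c2 d2 := by
  intro p
  induction p with
  | nil => intro q v d1 d2 hp; exact absurd rfl (path_ne_nil hp)
  | cons a t ih =>
    intro q v d1 d2 hp hq h12 h21
    obtain rfl : a = v := by simpa using hp.2.1
    rcases t with _ | ⟨x, t'⟩
    · obtain rfl : a = d1 := path_singleton hp
      exact absurd ⟨q, hq⟩ h12
    · have hpt : IsPath E (x :: t') x d1 := ⟨hp.1.tail, rfl, by simpa using hp.2.2⟩
      have hax : E a x := (List.isChain_cons_cons.1 hp.1).1
      rcases q with _ | ⟨b, s⟩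
      · exact absurd rfl (path_ne_nil hq)
      · have hba : b = a := by simpa using hq.2.1
        rcases s with _ | ⟨y, s'⟩
        · obtain rfl : a = d2 := path_singleton (show IsPath E [a] a d2 by rwa [hba] at hq)
          exact absurd ⟨_, hp⟩ h21
        · have hqt : IsPath E (y :: s') y d2 := ⟨hq.1.tail, rfl, by simpa using hq.2.2⟩
          have hay : E a y := hba ▸ (List.isChain_cons_cons.1 hq.1).1
          by_cases hxy : x = y
          · subst hxy
            obtain ⟨w, c1, c2, hw, hc1, hc2, hne, hr1, hr2⟩ := ih hpt hqt h12 h21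
            exact ⟨w, c1, c2, reach_trans (reach_of_arc hax) hw, hc1, hc2, hne, hr1, hr2⟩
          · exact ⟨a, x, y, reach_refl a, hax, hay, hxy, ⟨_, hpt⟩, ⟨_, hqt⟩⟩

end Meet

section Emb
variable {V W : Type*} [Fintype W] {ES : V → V → Prop} {ET : W → W → Prop}
  {f : V → W} {rT : W} {v a b : V}

theorem emb_reach (hf : IsMinorEmb ES ET f) (h : ES a b) : Reach ET (f a) (f b) := by
  obtain ⟨p, hp, -⟩ := hf.2 a b h
  exact ⟨p, hp⟩

theorem emb_sibling_incomp (hT : IsRootedTree ET rT) (hS : ∀ x, ¬ ES x x)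
    (hf : IsMinorEmb ES ET f) (h1 : ES v a) (h2 : ES v b) (hab : a ≠ b) :
    ¬ Reach ET (f a) (f b) := by
  rintro ⟨pab, hpab⟩
  obtain ⟨qb, hqb, hqbint⟩ := hf.2 v b h2
  obtain ⟨pa, hpa, -⟩ := hf.2 v a h1
  have hcat : IsPath ET (pa ++ pab.tail) (f v) (f b) := path_concat hpa hpab
  have he : qb = pa ++ pab.tail := uniq_between hT hqb hcat
  have hmem : f a ∈ qb := by
    rw [he]
    have hd := path_concat_decomp hpa
    rw [hd]
    simp
  have hva : v ≠ a := by rintro rfl; exact hS _ h1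
  have hint := path_mem_interior hqb hmem
    (fun h => hva (hf.1 h.symm)) (fun h => hab (hf.1 h))
  exact hqbint _ hint ⟨a, rfl⟩

/-- the image of a branching node under a minor embedding yields a fork in the target. -/
theorem emb_fork (hT : IsRootedTree ET rT) (hS : ∀ x, ¬ ES x x)
    (hf : IsMinorEmb ES ET f) (h1 : ES v a) (h2 : ES v b) (hab : a ≠ b) :
    ∃ w c1 c2, Reach ET (f v) w ∧ ET w c1 ∧ ET w c2 ∧ c1 ≠ c2 ∧
      Reach ET c1 (f a) ∧ Reach ET c2 (f b) := by
  obtain ⟨p, hp, -⟩ := hf.2 v a h1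
  obtain ⟨q, hq, -⟩ := hf.2 v b h2
  exact meet_lemma p hp hq (emb_sibling_incomp hT hS hf h1 h2 hab)
    (emb_sibling_incomp hT hS hf h2 h1 (Ne.symm hab))

end Emb

section Concrete
variable {n : ℕ}

def PE (P : Fin n → Option (Fin n)) (a b : Fin n) : Prop := P b = some a

instance (P : Fin n → Option (Fin n)) (a b : Fin n) : Decidable (PE P a b) :=
  inferInstanceAs (Decidable (P b = some a))

theorem path_shape {P : Fin n → Option (Fin n)} {p : List (Fin n)} {r v : Fin n}
    (h : IsPath (PE P) p r v) :
    (p = [r] ∧ v = r) ∨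
      ∃ u p', P v = some u ∧ p = p' ++ [v] ∧ IsPath (PE P) p' r u := by
  have hd := path_concat_decomp h
  rcases hdl : p.dropLast with _ | ⟨z, t⟩
  · left
    rw [hdl] at hd
    simp at hd
    have := h.2.1
    rw [hd] at this
    simp at this
    exact ⟨by rw [hd, this], this⟩
  · right
    have hne : p.dropLast ≠ [] := by simp [hdl]
    refine ⟨(p.dropLast).getLast hne, p.dropLast, ?_, hd, ?_, ?_, ?_⟩
    · have hc : List.Chain' (PE P) (p.dropLast ++ [v]) := by rw [← hd]; exact h.1
      have := (List.isChain_append.1 hc).2.2 (p.dropLast.getLast hne)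
        (by simp [List.getLast?_eq_getLast hne]) v rfl
      exact this
    · have hc : List.Chain' (PE P) (p.dropLast ++ [v]) := by rw [← hd]; exact h.1
      exact (List.isChain_append.1 hc).1
    · have := h.2.1
      rw [hd, List.head?_append_of_ne_nil _ hne] at this
      exact this
    · simp [List.getLast?_eq_getLast hne]

theorem mkTree (P : Fin n → Option (Fin n)) (d : Fin n → ℕ) (r : Fin n)
    (h0 : P r = none) (hroot : ∀ v, P v = none → v = r)
    (hd : ∀ a b, P b = some a → d b = d a + 1) :
    IsRootedTree (PE P) r := by
  have hreach : ∀ (N : ℕ) (v : Fin n), d v ≤ N → ∃ p, IsPath (PE P) p r v := by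
    intro N
    induction N with
    | zero =>
      intro v hv
      rcases hP : P v with _ | u
      · obtain rfl := hroot v hP
        exact ⟨[v], by simp [IsPath, List.Chain']⟩
      · have := hd u v hP; omega
    | succ N ih =>
      intro v hv
      rcases hP : P v with _ | u
      · obtain rfl := hroot v hP
        exact ⟨[v], by simp [IsPath, List.Chain']⟩
      · have hdu := hd u v hP
        obtain ⟨p, hp⟩ := ih u (by omega)
        exact ⟨p ++ [v], path_concat (q := [u, v]) hp ⟨by simp [List.Chain', PE, hP], by simp, by simp⟩⟩
  have huniq : ∀ (N : ℕ) (v : Fin n), d v ≤ N → ∀ p q, IsPath (PE P) p r v →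
      IsPath (PE P) q r v → p = q := by
    intro N
    induction N with
    | zero =>
      intro v hv p q hp hq
      rcases path_shape hp with ⟨h1, rfl⟩ | ⟨u, p', hu, _, _⟩
      · rcases path_shape hq with ⟨h2, -⟩ | ⟨u, q', hu, _, _⟩
        · rw [h1, h2]
        · rw [h0] at hu; exact absurd hu (by simp)
      · have := hd u v hu; omega
    | succ N ih =>
      intro v hv p q hp hq
      rcases path_shape hp with ⟨h1, rfl⟩ | ⟨u, p', hu, hpe, hp'⟩
      · rcases path_shape hq with ⟨h2, -⟩ | ⟨u, q', hu, _, _⟩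
        · rw [h1, h2]
        · rw [h0] at hu; exact absurd hu (by simp)
      · rcases path_shape hq with ⟨h2, rfl⟩ | ⟨u', q', hu', hqe, hq'⟩
        · rw [h0] at hu; exact absurd hu (by simp)
        · rw [hu] at hu'
          obtain rfl : u = u' := by simpa using hu'
          have hdu := hd u v hu
          rw [hpe, hqe, ih u (by omega) p' q' hp' hq']
  refine ⟨?_, ?_, ?_⟩
  · intro v h
    have := hd v v h; omega
  · intro v; exact hreach (d v) v le_rfl
  · intro v p q hp hq; exact huniq (d v) v le_rfl p q hp hq

end Concrete

section ConcreteTrees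

def PCB : Fin 7 → Option (Fin 7) := ![none, some 0, some 0, some 1, some 1, some 2, some 2]
def PT  : Fin 7 → Option (Fin 7) := ![none, some 0, some 0, some 1, some 1, some 3, some 3]
def PM6 : Fin 6 → Option (Fin 6) := ![none, some 0, some 0, some 0, some 1, some 1]
def PS9 : Fin 9 → Option (Fin 9) :=
  ![none, some 0, some 0, some 1, some 1, some 3, some 3, some 2, some 2]

theorem treeCB : IsRootedTree (PE PCB) 0 :=
  mkTree PCB ![0, 1, 1, 2, 2, 2, 2] 0 (by decide) (by decide) (by decide)

theorem treeT : IsRootedTree (PE PT) 0 :=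
  mkTree PT ![0, 1, 1, 2, 2, 3, 3] 0 (by decide) (by decide) (by decide)

theorem treeM6 : IsRootedTree (PE PM6) 0 :=
  mkTree PM6 ![0, 1, 1, 1, 2, 2] 0 (by decide) (by decide) (by decide)

theorem treeS9 : IsRootedTree (PE PS9) 0 :=
  mkTree PS9 ![0, 1, 1, 2, 2, 3, 3, 2, 2] 0 (by decide) (by decide) (by decide)

def fM6CB : Fin 6 → Fin 7 := ![0, 1, 5, 6, 3, 4]
def gM6T  : Fin 6 → Fin 7 := ![0, 3, 2, 4, 5, 6]
def fCBS9 : Fin 7 → Fin 9 := ![0, 1, 2, 3, 4, 7, 8]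
def gTS9  : Fin 7 → Fin 9 := ![0, 1, 2, 3, 4, 5, 6]

theorem embM6CB : IsMinorEmb (PE PM6) (PE PCB) fM6CB := by
  refine ⟨by decide, ?_⟩
  intro a b h
  have harc : (a = 0 ∧ b = 1) ∨ (a = 0 ∧ b = 2) ∨ (a = 0 ∧ b = 3) ∨
      (a = 1 ∧ b = 4) ∨ (a = 1 ∧ b = 5) := by revert h; revert a b; decide
  rcases harc with ⟨rfl, rfl⟩ | ⟨rfl, rfl⟩ | ⟨rfl, rfl⟩ | ⟨rfl, rfl⟩ | ⟨rfl, rfl⟩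
  · exact ⟨[0, 1], ⟨by simp only [List.Chain', List.isChain_cons_cons, List.isChain_singleton, and_true]; decide, by decide, by decide⟩,
      by simp only [Set.mem_range, not_exists]; decide⟩
  · exact ⟨[0, 2, 5], ⟨by simp only [List.Chain', List.isChain_cons_cons, List.isChain_singleton, and_true]; decide, by decide, by decide⟩,
      by simp only [Set.mem_range, not_exists]; decide⟩
  · exact ⟨[0, 2, 6], ⟨by simp only [List.Chain', List.isChain_cons_cons, List.isChain_singleton, and_true]; decide, by decide, by decide⟩,
      by simp only [Set.mem_range, not_exists]; decide⟩
  · exact ⟨[1, 3], ⟨by simp only [List.Chain', List.isChain_cons_cons, List.isChain_singleton, and_true]; decide, by decide, by decide⟩,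
      by simp only [Set.mem_range, not_exists]; decide⟩
  · exact ⟨[1, 4], ⟨by simp only [List.Chain', List.isChain_cons_cons, List.isChain_singleton, and_true]; decide, by decide, by decide⟩,
      by simp only [Set.mem_range, not_exists]; decide⟩

theorem embM6T : IsMinorEmb (PE PM6) (PE PT) gM6T := by
  refine ⟨by decide, ?_⟩
  intro a b h
  have harc : (a = 0 ∧ b = 1) ∨ (a = 0 ∧ b = 2) ∨ (a = 0 ∧ b = 3) ∨
      (a = 1 ∧ b = 4) ∨ (a = 1 ∧ b = 5) := by revert h; revert a b; decide
  rcases harc with ⟨rfl, rfl⟩ | ⟨rfl, rfl⟩ | ⟨rfl, rfl⟩ | ⟨rfl, rfl⟩ | ⟨rfl, rfl⟩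
  · exact ⟨[0, 1, 3], ⟨by simp only [List.Chain', List.isChain_cons_cons, List.isChain_singleton, and_true]; decide, by decide, by decide⟩,
      by simp only [Set.mem_range, not_exists]; decide⟩
  · exact ⟨[0, 2], ⟨by simp only [List.Chain', List.isChain_cons_cons, List.isChain_singleton, and_true]; decide, by decide, by decide⟩,
      by simp only [Set.mem_range, not_exists]; decide⟩
  · exact ⟨[0, 1, 4], ⟨by simp only [List.Chain', List.isChain_cons_cons, List.isChain_singleton, and_true]; decide, by decide, by decide⟩,
      by simp only [Set.mem_range, not_exists]; decide⟩
  · exact ⟨[3, 5], ⟨by simp only [List.Chain', List.isChain_cons_cons, List.isChain_singleton, and_true]; decide, by decide, by decide⟩,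
      by simp only [Set.mem_range, not_exists]; decide⟩
  · exact ⟨[3, 6], ⟨by simp only [List.Chain', List.isChain_cons_cons, List.isChain_singleton, and_true]; decide, by decide, by decide⟩,
      by simp only [Set.mem_range, not_exists]; decide⟩

theorem embCBS9 : IsMinorEmb (PE PCB) (PE PS9) fCBS9 := by
  refine ⟨by decide, ?_⟩
  intro a b h
  have harc : (a = 0 ∧ b = 1) ∨ (a = 0 ∧ b = 2) ∨ (a = 1 ∧ b = 3) ∨
      (a = 1 ∧ b = 4) ∨ (a = 2 ∧ b = 5) ∨ (a = 2 ∧ b = 6) := by revert h; revert a b; decide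
  rcases harc with ⟨rfl, rfl⟩ | ⟨rfl, rfl⟩ | ⟨rfl, rfl⟩ | ⟨rfl, rfl⟩ | ⟨rfl, rfl⟩ | ⟨rfl, rfl⟩
  · exact ⟨[0, 1], ⟨by simp only [List.Chain', List.isChain_cons_cons, List.isChain_singleton, and_true]; decide, by decide, by decide⟩, by simp⟩
  · exact ⟨[0, 2], ⟨by simp only [List.Chain', List.isChain_cons_cons, List.isChain_singleton, and_true]; decide, by decide, by decide⟩, by simp⟩
  · exact ⟨[1, 3], ⟨by simp only [List.Chain', List.isChain_cons_cons, List.isChain_singleton, and_true]; decide, by decide, by decide⟩, by simp⟩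
  · exact ⟨[1, 4], ⟨by simp only [List.Chain', List.isChain_cons_cons, List.isChain_singleton, and_true]; decide, by decide, by decide⟩, by simp⟩
  · exact ⟨[2, 7], ⟨by simp only [List.Chain', List.isChain_cons_cons, List.isChain_singleton, and_true]; decide, by decide, by decide⟩, by simp⟩
  · exact ⟨[2, 8], ⟨by simp only [List.Chain', List.isChain_cons_cons, List.isChain_singleton, and_true]; decide, by decide, by decide⟩, by simp⟩

theorem embTS9 : IsMinorEmb (PE PT) (PE PS9) gTS9 := by
  refine ⟨by decide, ?_⟩
  intro a b h
  have harc : (a = 0 ∧ b = 1) ∨ (a = 0 ∧ b = 2) ∨ (a = 1 ∧ b = 3) ∨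
      (a = 1 ∧ b = 4) ∨ (a = 3 ∧ b = 5) ∨ (a = 3 ∧ b = 6) := by revert h; revert a b; decide
  rcases harc with ⟨rfl, rfl⟩ | ⟨rfl, rfl⟩ | ⟨rfl, rfl⟩ | ⟨rfl, rfl⟩ | ⟨rfl, rfl⟩ | ⟨rfl, rfl⟩
  · exact ⟨[0, 1], ⟨by simp only [List.Chain', List.isChain_cons_cons, List.isChain_singleton, and_true]; decide, by decide, by decide⟩, by simp⟩
  · exact ⟨[0, 2], ⟨by simp only [List.Chain', List.isChain_cons_cons, List.isChain_singleton, and_true]; decide, by decide, by decide⟩, by simp⟩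
  · exact ⟨[1, 3], ⟨by simp only [List.Chain', List.isChain_cons_cons, List.isChain_singleton, and_true]; decide, by decide, by decide⟩, by simp⟩
  · exact ⟨[1, 4], ⟨by simp only [List.Chain', List.isChain_cons_cons, List.isChain_singleton, and_true]; decide, by decide, by decide⟩, by simp⟩
  · exact ⟨[3, 5], ⟨by simp only [List.Chain', List.isChain_cons_cons, List.isChain_singleton, and_true]; decide, by decide, by decide⟩, by simp⟩
  · exact ⟨[3, 6], ⟨by simp only [List.Chain', List.isChain_cons_cons, List.isChain_singleton, and_true]; decide, by decide, by decide⟩, by simp⟩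

end ConcreteTrees

section Helpers
variable {V : Type*} {E : V → V → Prop} {p : List V} {a b : V}

theorem short_path (h : IsPath E p a b) (hab : a ≠ b) (hd : p.tail.dropLast = []) :
    E a b := by
  have hp := path_cons_decomp h
  rcases ht : p.tail with _ | ⟨x, t⟩
  · rw [hp, ht] at h
    exact absurd (path_singleton h) hab
  · rcases t with _ | ⟨y, t'⟩
    · have hb : x = b := by
        have := h.2.2; rw [hp, ht] at this; simpa using this
      have hc := h.1
      rw [hp, ht] at hc
      exact hb ▸ (List.isChain_cons_cons.1 hc).1
    · rw [ht] at hd; simp at hd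

theorem four_forks_bound' {V : Type*} [Fintype V] {E : V → V → Prop} {r : V}
    (hT : IsRootedTree E r) {v1 v2 v3 v4 c1 d1 c2 d2 c3 d3 c4 d4 : V}
    (h12 : v1 ≠ v2) (h13 : v1 ≠ v3) (h14 : v1 ≠ v4)
    (h23 : v2 ≠ v3) (h24 : v2 ≠ v4) (h34 : v3 ≠ v4)
    (hc1 : E v1 c1) (hd1 : E v1 d1) (hcd1 : c1 ≠ d1)
    (hc2 : E v2 c2) (hd2 : E v2 d2) (hcd2 : c2 ≠ d2)
    (hc3 : E v3 c3) (hd3 : E v3 d3) (hcd3 : c3 ≠ d3)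
    (hc4 : E v4 c4) (hd4 : E v4 d4) (hcd4 : c4 ≠ d4) :
    9 ≤ Fintype.card V := by
  classical
  apply four_forks_bound hT ![v1, v2, v3, v4] ![c1, c2, c3, c4] ![d1, d2, d3, d4]
  · intro i j hij
    fin_cases i <;> fin_cases j <;> simp_all
  · intro i; fin_cases i <;> assumption
  · intro i; fin_cases i <;> assumption
  · intro i; fin_cases i <;> assumption

theorem T_forks : ∀ a b : Fin 7, PE PT a b → a = 0 ∨ a = 1 ∨ a = 3 := by decide

theorem T_comparable : ∀ x y : Fin 7, (x = 0 ∨ x = 1 ∨ x = 3) →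
    (y = 0 ∨ y = 1 ∨ y = 3) → Reach (PE PT) x y ∨ Reach (PE PT) y x := by
  have r01 : Reach (PE PT) 0 1 := ⟨[0, 1],
    by simp only [List.Chain', List.isChain_cons_cons, List.isChain_singleton, and_true]; decide, by decide, by decide⟩
  have r03 : Reach (PE PT) 0 3 := ⟨[0, 1, 3],
    by simp only [List.Chain', List.isChain_cons_cons, List.isChain_singleton, and_true]; decide, by decide, by decide⟩
  have r13 : Reach (PE PT) 1 3 := ⟨[1, 3],
    by simp only [List.Chain', List.isChain_cons_cons, List.isChain_singleton, and_true]; decide, by decide, by decide⟩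
  rintro x y (rfl | rfl | rfl) (rfl | rfl | rfl)
  · exact Or.inl (reach_refl _)
  · exact Or.inl r01
  · exact Or.inl r03
  · exact Or.inr r01
  · exact Or.inl (reach_refl _)
  · exact Or.inl r13
  · exact Or.inr r03
  · exact Or.inr r13
  · exact Or.inl (reach_refl _)

end Helpers

theorem sup_bound : ∀ m : ℕ, CommonSupSize (PE PCB) (PE PT) m → 9 ≤ m := by
  rintro m ⟨ES, rS, hS, ⟨f, hf⟩, ⟨g, hg⟩⟩
  -- two incomparable forks from CB
  obtain ⟨w1, c1, c2, hw1r, hw1c1, hw1c2, hc12, hcr1, hcr2⟩ :=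
    emb_fork hS treeCB.no_self hf (show PE PCB 1 3 by decide) (show PE PCB 1 4 by decide)
      (by decide)
  obtain ⟨w2, e1, e2, hw2r, hw2e1, hw2e2, he12, her1, her2⟩ :=
    emb_fork hS treeCB.no_self hf (show PE PCB 2 5 by decide) (show PE PCB 2 6 by decide)
      (by decide)
  have hf12 : ¬ Reach ES (f 1) (f 2) :=
    emb_sibling_incomp hS treeCB.no_self hf (show PE PCB 0 1 by decide)
      (show PE PCB 0 2 by decide) (by decide)
  have hf21 : ¬ Reach ES (f 2) (f 1) :=
    emb_sibling_incomp hS treeCB.no_self hf (show PE PCB 0 2 by decide)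
      (show PE PCB 0 1 by decide) (by decide)
  have hw12 : ¬ Reach ES w1 w2 := by
    intro h
    rcases comparable_of_common_desc hS (reach_trans hw1r h) hw2r with h' | h'
    · exact hf12 h'
    · exact hf21 h'
  have hw21 : ¬ Reach ES w2 w1 := by
    intro h
    rcases comparable_of_common_desc hS hw1r (reach_trans hw2r h) with h' | h'
    · exact hf12 h'
    · exact hf21 h'
  -- chain of three forks from T
  obtain ⟨u1, a1, a2, hu1r, hu1a1, hu1a2, ha12, hra1, hra2⟩ :=
    emb_fork hS treeT.no_self hg (show PE PT 0 1 by decide) (show PE PT 0 2 by decide)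
      (by decide)
  obtain ⟨u2, b1, b2, hu2r, hu2b1, hu2b2, hb12, hrb1, hrb2⟩ :=
    emb_fork hS treeT.no_self hg (show PE PT 1 3 by decide) (show PE PT 1 4 by decide)
      (by decide)
  obtain ⟨u3, g1, g2, hu3r, hu3g1, hu3g2, hg12', hrg1, hrg2⟩ :=
    emb_fork hS treeT.no_self hg (show PE PT 3 5 by decide) (show PE PT 3 6 by decide)
      (by decide)
  have hg12 : ¬ Reach ES (g 1) (g 2) :=
    emb_sibling_incomp hS treeT.no_self hg (show PE PT 0 1 by decide)
      (show PE PT 0 2 by decide) (by decide)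
  have hg34 : ¬ Reach ES (g 3) (g 4) :=
    emb_sibling_incomp hS treeT.no_self hg (show PE PT 1 3 by decide)
      (show PE PT 1 4 by decide) (by decide)
  -- reach facts
  have hu1g1 : Reach ES u1 (g 1) := reach_trans (reach_of_arc hu1a1) hra1
  have hu2g3 : Reach ES u2 (g 3) := reach_trans (reach_of_arc hu2b1) hrb1
  have hu12 : Reach ES u1 u2 := reach_trans hu1g1 hu2r
  have hu23 : Reach ES u2 u3 := reach_trans hu2g3 hu3r
  have hu13 : Reach ES u1 u3 := reach_trans hu12 hu23
  -- distinctness in the chain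
  have hne12 : u1 ≠ u2 := by
    rintro rfl
    have : u1 = g 1 := reach_antisymm hS hu1g1 hu2r
    subst this
    exact hg12 (reach_trans (reach_of_arc hu1a2) hra2)
  have hne23 : u2 ≠ u3 := by
    rintro rfl
    have : u2 = g 3 := reach_antisymm hS hu2g3 hu3r
    subst this
    exact hg34 (reach_trans (reach_of_arc hu2b2) hrb2)
  have hne13 : u1 ≠ u3 := by
    rintro rfl
    exact hne12 (reach_antisymm hS hu12 hu23)
  -- w1 and w2 cannot both lie in the chain
  have hwchain : w1 ∉ ({u1, u2, u3} : Set (Fin m)) ∨ w2 ∉ ({u1, u2, u3} : Set (Fin m)) := by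
    by_contra hcon
    push_neg at hcon
    obtain ⟨hin1, hin2⟩ := hcon
    have hcomp : Reach ES w1 w2 ∨ Reach ES w2 w1 := by
      rcases hin1 with rfl | rfl | rfl <;> rcases hin2 with rfl | rfl | rfl
      · exact Or.inl (reach_refl _)
      · exact Or.inl hu12
      · exact Or.inl hu13
      · exact Or.inr hu12
      · exact Or.inl (reach_refl _)
      · exact Or.inl hu23
      · exact Or.inr hu13
      · exact Or.inr hu23
      · exact Or.inl (reach_refl _)
    rcases hcomp with h | h
    · exact hw12 h
    · exact hw21 h
  have key : 9 ≤ Fintype.card (Fin m) := by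
    rcases hwchain with hw | hw
    · simp only [Set.mem_insert_iff, Set.mem_singleton_iff, not_or] at hw
      exact four_forks_bound' hS hne12 hne13 (Ne.symm hw.1) hne23 (Ne.symm hw.2.1)
        (Ne.symm hw.2.2) hu1a1 hu1a2 ha12 hu2b1 hu2b2 hb12 hu3g1 hu3g2 hg12'
        hw1c1 hw1c2 hc12
    · simp only [Set.mem_insert_iff, Set.mem_singleton_iff, not_or] at hw
      exact four_forks_bound' hS hne12 hne13 (Ne.symm hw.1) hne23 (Ne.symm hw.2.1)
        (Ne.symm hw.2.2) hu1a1 hu1a2 ha12 hu2b1 hu2b2 hb12 hu3g1 hu3g2 hg12'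
        hw2e1 hw2e2 he12
  simpa using key

theorem minor_bound : ∀ m : ℕ, CommonMinorSize (PE PCB) (PE PT) m → m ≤ 6 := by
  rintro m ⟨ES, rS, hS, ⟨f, hf⟩, ⟨g, hg⟩⟩
  have hm7 : m ≤ 7 := by simpa using Fintype.card_le_of_injective f hf.1
  by_contra hcon
  push_neg at hcon
  have hm : m = 7 := le_antisymm hm7 hcon
  subst hm
  classical
  have hfsurj : Function.Surjective f := Finite.surjective_of_injective hf.1
  -- arcs of S map to arcs of CB
  have harc : ∀ a b, ES a b → PE PCB (f a) (f b) := by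
    intro a b hab
    obtain ⟨p, hp, hint⟩ := hf.2 a b hab
    have hne : f a ≠ f b := by
      intro he
      have : a = b := hf.1 he
      subst this
      exact hS.no_self a hab
    rcases hd : p.tail.dropLast with _ | ⟨x, t⟩
    · exact short_path hp hne hd
    · exact absurd (hfsurj x) (by
        have := hint x (by rw [hd]; simp)
        simpa [Set.range] using this)
  letI : ∀ a b : Fin 7, Decidable (ES a b) := fun a b => Classical.dec _
  set AS : Finset (Fin 7 × Fin 7) := Finset.univ.filter (fun p => ES p.1 p.2) with hAS
  set ACB : Finset (Fin 7 × Fin 7) := Finset.univ.filter (fun p => PE PCB p.1 p.2) with hACB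
  have cardS : AS.card = 6 := by rw [hAS, arcs_card hS]; rfl
  have cardCB : ACB.card = 6 := by rw [hACB, arcs_card treeCB]; rfl
  have hmapinj : Function.Injective (Prod.map f f : Fin 7 × Fin 7 → Fin 7 × Fin 7) :=
    Function.Injective.prodMap hf.1 hf.1
  have himg : AS.image (Prod.map f f) ⊆ ACB := by
    intro x hx
    obtain ⟨⟨a, b⟩, hab, rfl⟩ := Finset.mem_image.1 hx
    rw [hAS] at hab
    simp only [Finset.mem_filter, Finset.mem_univ, true_and] at hab
    rw [hACB]
    simp only [Finset.mem_filter, Finset.mem_univ, true_and]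
    exact harc a b hab
  have heq : AS.image (Prod.map f f) = ACB := by
    apply Finset.eq_of_subset_of_card_le himg
    rw [Finset.card_image_of_injective _ hmapinj, cardS, cardCB]
  have hex : ∀ x y : Fin 7, PE PCB x y → ∃ a b, ES a b ∧ f a = x ∧ f b = y := by
    intro x y hxy
    have hmem : (x, y) ∈ ACB := by
      rw [hACB]; simp only [Finset.mem_filter, Finset.mem_univ, true_and]; exact hxy
    rw [← heq] at hmem
    obtain ⟨⟨a, b⟩, hab, he⟩ := Finset.mem_image.1 hmem
    rw [hAS] at hab
    simp only [Finset.mem_filter, Finset.mem_univ, true_and] at hab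
    refine ⟨a, b, hab, ?_, ?_⟩
    · exact congrArg Prod.fst he
    · exact congrArg Prod.snd he
  obtain ⟨s0, s1, h01, hfs0, hfs1⟩ := hex 0 1 (by decide)
  obtain ⟨s0', s2, h02, hfs0', hfs2⟩ := hex 0 2 (by decide)
  obtain ⟨t1, s3, h13, hft1, hfs3⟩ := hex 1 3 (by decide)
  obtain ⟨t1', s4, h14, hft1', hfs4⟩ := hex 1 4 (by decide)
  obtain ⟨t2, s5, h25, hft2, hfs5⟩ := hex 2 5 (by decide)
  obtain ⟨t2', s6, h26, hft2', hfs6⟩ := hex 2 6 (by decide)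
  have e0 : s0' = s0 := hf.1 (by rw [hfs0, hfs0'])
  have e1 : t1 = s1 := hf.1 (by rw [hft1, hfs1])
  have e1' : t1' = s1 := hf.1 (by rw [hft1', hfs1])
  have e2 : t2 = s2 := hf.1 (by rw [hft2, hfs2])
  have e2' : t2' = s2 := hf.1 (by rw [hft2', hfs2])
  rw [e0] at h02
  rw [e1] at h13
  rw [e1'] at h14
  rw [e2] at h25
  rw [e2'] at h26
  have hne12 : s1 ≠ s2 := by
    rintro rfl; rw [hfs1] at hfs2; exact absurd hfs2 (by decide)
  have hne34 : s3 ≠ s4 := by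
    rintro rfl; rw [hfs3] at hfs4; exact absurd hfs4 (by decide)
  have hne56 : s5 ≠ s6 := by
    rintro rfl; rw [hfs5] at hfs6; exact absurd hfs6 (by decide)
  -- now embed into T and obtain two incomparable forks there
  obtain ⟨w1, c1, c2, hw1r, hw1c1, hw1c2, hc12, hcr1, hcr2⟩ :=
    emb_fork treeT hS.no_self hg h13 h14 hne34
  obtain ⟨w2, e1, e2, hw2r, hw2e1, hw2e2, he12, her1, her2⟩ :=
    emb_fork treeT hS.no_self hg h25 h26 hne56
  have hg12 : ¬ Reach (PE PT) (g s1) (g s2) :=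
    emb_sibling_incomp treeT hS.no_self hg h01 h02 hne12
  have hg21 : ¬ Reach (PE PT) (g s2) (g s1) :=
    emb_sibling_incomp treeT hS.no_self hg h02 h01 (Ne.symm hne12)
  have hw12 : ¬ Reach (PE PT) w1 w2 := by
    intro h
    rcases comparable_of_common_desc treeT (reach_trans hw1r h) hw2r with h' | h'
    · exact hg12 h'
    · exact hg21 h'
  have hw21 : ¬ Reach (PE PT) w2 w1 := by
    intro h
    rcases comparable_of_common_desc treeT hw1r (reach_trans hw2r h) with h' | h'
    · exact hg12 h'
    · exact hg21 h'
  have hcompT := T_comparable w1 w2 (T_forks w1 c1 hw1c1) (T_forks w2 e1 hw2e1)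
  rcases hcompT with h | h
  · exact hw12 h
  · exact hw21 h


/-- There exist rooted trees `T₁`, `T₂` with largest common minor size `nμ` and
smallest common supertree size `nσ` such that `nσ ≠ |V(T₁)| + |V(T₂)| − nμ`. -/
theorem stmt16 :
    ∃ (n1 n2 : ℕ) (E1 : Fin n1 → Fin n1 → Prop) (r1 : Fin n1)
      (E2 : Fin n2 → Fin n2 → Prop) (r2 : Fin n2) (nmu nsig : ℕ),
      IsRootedTree E1 r1 ∧ IsRootedTree E2 r2 ∧
      CommonMinorSize E1 E2 nmu ∧ (∀ m : ℕ, CommonMinorSize E1 E2 m → m ≤ nmu) ∧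
      CommonSupSize E1 E2 nsig ∧ (∀ m : ℕ, CommonSupSize E1 E2 m → nsig ≤ m) ∧
      nsig ≠ n1 + n2 - nmu := by
  refine ⟨7, 7, PE PCB, 0, PE PT, 0, 6, 9, treeCB, treeT,
    ⟨PE PM6, 0, treeM6, ⟨fM6CB, embM6CB⟩, ⟨gM6T, embM6T⟩⟩, minor_bound,
    ⟨PE PS9, 0, treeS9, ⟨fCBS9, embCBS9⟩, ⟨gTS9, embTS9⟩⟩, sup_bound, by norm_num⟩
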